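/- arXiv:1409.6983 — 5 statements merged into one kernel-verified Lean document; each statement's English description precedes it below -/
import Mathlib

section
/- Let C be a nonempty open convex cone in ℝⁿ with C ≠ ℝⁿ, and let h : C → ℝ be a positive, continuous, strictly convex function such that h(tu) = h(u)/t for all real t > 0 and all u ∈ C, and such that h(uᵢ) → ∞ for every sequence of points uᵢ ∈ C converging to a point of the topological boundary of C. Then for every u ∈ C and every nonzero v in the topological closure of C, one has h(u + v) < h(u). -/
/-- For a nonempty open convex cone `C ⊊ ℝⁿ` and a positive, continuous,
strictly convex function `h` on `C`, homogeneous of degree `-1` and blowing up at the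
boundary of `C`, one has `h (u + v) < h u` for all `u ∈ C` and nonzero `v ∈ closure C`. -/
theorem stmt0 (n : ℕ) (C : Set (Fin n → ℝ)) (h : (Fin n → ℝ) → ℝ)
    (hne : C.Nonempty) (hopen : IsOpen C) (hconv : Convex ℝ C)
    (hcone : ∀ t : ℝ, 0 < t → ∀ x ∈ C, t • x ∈ C)
    (hCne : C ≠ Set.univ)
    (hpos : ∀ u ∈ C, 0 < h u)
    (hcont : ContinuousOn h C)
    (hsconv : StrictConvexOn ℝ C h)
    (hhom : ∀ t : ℝ, 0 < t → ∀ u ∈ C, h (t • u) = h u / t)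
    (hblow : ∀ (u : ℕ → (Fin n → ℝ)) (x : Fin n → ℝ), (∀ i, u i ∈ C) →
      Filter.Tendsto u Filter.atTop (nhds x) → x ∈ frontier C →
      Filter.Tendsto (fun i => h (u i)) Filter.atTop Filter.atTop) :
    ∀ u ∈ C, ∀ v ∈ closure C, v ≠ 0 → h (u + v) < h u := by
  -- closure of C is closed under positive scaling
  have hclcone : ∀ t : ℝ, 0 < t → ∀ v ∈ closure C, t • v ∈ closure C := by
    intro t ht v hv
    exact map_mem_closure (continuous_const_smul t) hv (fun x hx => hcone t ht x hx)
  -- C + closure C ⊆ C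
  have hCadd : ∀ u ∈ C, ∀ v ∈ closure C, u + v ∈ C := by
    intro u hu v hv
    have h2u : (2:ℝ) • u ∈ C := hcone 2 two_pos u hu
    have h2v : (2:ℝ) • v ∈ closure C := hclcone 2 two_pos v hv
    have hmem := hconv.combo_interior_closure_mem_interior
      (by rwa [hopen.interior_eq]) h2v (by norm_num : (0:ℝ) < 1/2)
      (by norm_num : (0:ℝ) ≤ 1/2) (by norm_num)
    rw [hopen.interior_eq] at hmem
    have : (1/2 : ℝ) • ((2:ℝ) • u) + (1/2 : ℝ) • ((2:ℝ) • v) = u + v := by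
      rw [smul_smul, smul_smul]; norm_num
    rwa [this] at hmem
  -- weak inequality, interior version
  have hw1 : ∀ u ∈ C, ∀ v ∈ C, h (u + v) ≤ h u := by
    intro u hu v hv
    have huv : u + v ∈ C := hCadd u hu v (subset_closure hv)
    have key : ∀ ε : ℝ, 0 < ε → h (u + v) * (1 + ε)^2 ≤ h u + ε^2 * h v := by
      intro ε hε
      have h1ε : (0:ℝ) < 1 + ε := by linarith
      have hεv : ε⁻¹ • v ∈ C := hcone _ (inv_pos.mpr hε) v hv
      have hcomb := hsconv.convexOn.2 hu hεv
        (le_of_lt (by positivity : (0:ℝ) < 1/(1+ε)))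
        (le_of_lt (by positivity : (0:ℝ) < ε/(1+ε)))
        (by field_simp)
      have harg : (1/(1+ε) : ℝ) • u + (ε/(1+ε) : ℝ) • (ε⁻¹ • v)
          = ((1+ε)⁻¹ : ℝ) • (u + v) := by
        rw [smul_smul, smul_add]
        congr 1
        · rw [one_div]
        · congr 1
          field_simp
      rw [harg] at hcomb
      have hhom1 := hhom (1+ε)⁻¹ (by positivity) (u+v) huv
      have hhom2 := hhom ε⁻¹ (inv_pos.mpr hε) v hv
      rw [hhom1, hhom2] at hcomb
      have hv0 := hpos v hv
      simp only [smul_eq_mul, div_eq_mul_inv, inv_inv] at hcomb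
      have : h (u+v) * (1+ε) ≤ (1/(1+ε)) * h u + (ε/(1+ε)) * (h v * ε) := by
        rw [one_div]
        calc h (u+v) * (1+ε) ≤ 1 * (1+ε)⁻¹ * h u + ε * (1+ε)⁻¹ * (h v * ε) := hcomb
          _ = (1+ε)⁻¹ * h u + ε * (1+ε)⁻¹ * (h v * ε) := by ring
          _ = (1+ε)⁻¹ * h u + ε / (1+ε) * (h v * ε) := by rw [div_eq_mul_inv]
      have hfin : h (u+v) * (1+ε) * (1+ε) ≤ h u + ε^2 * h v := by
        have := mul_le_mul_of_nonneg_right this (le_of_lt h1ε)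
        calc h (u+v) * (1+ε) * (1+ε) ≤ ((1/(1+ε)) * h u + (ε/(1+ε)) * (h v * ε)) * (1+ε) := this
          _ = h u + ε^2 * h v := by field_simp
      calc h (u+v) * (1+ε)^2 = h (u+v) * (1+ε) * (1+ε) := by ring
        _ ≤ h u + ε^2 * h v := hfin
    have hvpos := hpos v hv
    have huvpos := hpos (u+v) huv
    refine le_of_forall_pos_le_add (fun η hη => ?_)
    set ε : ℝ := min 1 (η / (h v + 1)) with hεdef
    have hε : 0 < ε := lt_min one_pos (by positivity)
    have hε1 : ε ≤ 1 := min_le_left _ _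
    have hε2 : ε ≤ η / (h v + 1) := min_le_right _ _
    have hk := key ε hε
    have : ε^2 * h v ≤ η := by
      have h1 : ε^2 ≤ ε := by nlinarith
      have h2 : ε * (h v + 1) ≤ η :=
        (le_div_iff₀ (by positivity : (0:ℝ) < h v + 1)).mp hε2
      nlinarith
    nlinarith [sq_nonneg ε]
  -- weak inequality, closure version
  have hw2 : ∀ u ∈ C, ∀ v ∈ closure C, h (u + v) ≤ h u := by
    intro u hu v hv
    have huv : u + v ∈ C := hCadd u hu v hv
    have key : ∀ δ : ℝ, 0 < δ → δ < 1 → (1 - δ) * h (u + v) ≤ h u := by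
      intro δ hδ hδ1
      have h1δ : (0:ℝ) < 1 - δ := by linarith
      have hu1 : (1-δ:ℝ) • u ∈ C := hcone _ h1δ u hu
      have hw : δ • u + v ∈ C := hCadd (δ • u) (hcone δ hδ u hu) v hv
      have := hw1 _ hu1 _ hw
      have harg : (1-δ:ℝ) • u + (δ • u + v) = u + v := by
        rw [sub_smul, one_smul]; abel
      rw [harg, hhom (1-δ) h1δ u hu, le_div_iff₀ h1δ] at this
      linarith
    have huvpos := hpos (u+v) huv
    refine le_of_forall_pos_le_add (fun η hη => ?_)
    set δ : ℝ := min (1/2) (η / (h (u+v) + 1)) with hδdef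
    have hδ : 0 < δ := lt_min (by norm_num) (by positivity)
    have hδ1 : δ < 1 := lt_of_le_of_lt (min_le_left _ _) (by norm_num)
    have hδ2 : δ ≤ η / (h (u+v) + 1) := min_le_right _ _
    have hk := key δ hδ hδ1
    have : δ * h (u+v) ≤ η := by
      have h2 : δ * (h (u+v) + 1) ≤ η :=
        (le_div_iff₀ (by positivity : (0:ℝ) < h (u+v) + 1)).mp hδ2
      nlinarith
    nlinarith
  -- strict inequality
  intro u hu v hv hvne
  have h2v : (2:ℝ) • v ∈ closure C := hclcone 2 two_pos v hv
  have hu2v : u + (2:ℝ) • v ∈ C := hCadd u hu _ h2v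
  have hne' : u ≠ u + (2:ℝ) • v := by
    intro heq
    apply hvne
    have : (2:ℝ) • v = 0 := by
      have := heq.symm
      rwa [add_eq_left] at this
    simpa [smul_eq_zero] using this
  have hsc := hsconv.2 hu hu2v hne' (by norm_num : (0:ℝ) < 1/2)
    (by norm_num : (0:ℝ) < 1/2) (by norm_num)
  have harg : (1/2 : ℝ) • u + (1/2 : ℝ) • (u + (2:ℝ) • v) = u + v := by
    rw [smul_add, smul_smul]
    norm_num
    module
  rw [harg] at hsc
  have hw := hw2 u hu _ h2v
  simp only [smul_eq_mul] at hsc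
  linarith
end

section
/- Let C be a nonempty open convex cone in ℝⁿ, let h : C → ℝ be a positive convex function satisfying h(tu) = h(u)/t for all real t > 0 and u ∈ C, and let L : ℝⁿ → ℝ be a linear functional with L(x) > 0 for all x ∈ C. Then the function x ↦ L(x)·h(x) on C is bounded on positive combinations by its values at the generating points: for any x₁, …, x_m ∈ C and any s₁, …, s_m ≥ 0, not all zero, the point z = s₁x₁ + ⋯ + s_m x_m lies in C and satisfies L(z)h(z) ≤ max_{1 ≤ i ≤ m} L(xᵢ)h(xᵢ). -/
/-- For a nonempty open convex cone `C ⊆ ℝⁿ`, a positive convex function `h`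
on `C` homogeneous of degree `-1`, and a linear functional `L` positive on `C`, the function
`x ↦ L x * h x` is bounded on positive combinations by its values at the generating points:
`z = ∑ sᵢ • xᵢ` lies in `C` and `L z * h z ≤ max_i (L xᵢ * h xᵢ)`. -/
theorem stmt1 (n : ℕ) (C : Set (Fin n → ℝ)) (h : (Fin n → ℝ) → ℝ)
    (L : (Fin n → ℝ) →ₗ[ℝ] ℝ)
    (hne : C.Nonempty) (hopen : IsOpen C) (hconv : Convex ℝ C)
    (hcone : ∀ t : ℝ, 0 < t → ∀ x ∈ C, t • x ∈ C)
    (hpos : ∀ u ∈ C, 0 < h u)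
    (hcvx : ConvexOn ℝ C h)
    (hhom : ∀ t : ℝ, 0 < t → ∀ u ∈ C, h (t • u) = h u / t)
    (hLpos : ∀ x ∈ C, 0 < L x) :
    ∀ (m : ℕ) (x : Fin m → (Fin n → ℝ)) (s : Fin m → ℝ),
      (∀ i, x i ∈ C) → (∀ i, 0 ≤ s i) → ∀ hs : ∃ i, s i ≠ 0,
      (∑ i, s i • x i) ∈ C ∧
        L (∑ i, s i • x i) * h (∑ i, s i • x i) ≤
          Finset.univ.sup' (Finset.univ_nonempty_iff.mpr ⟨hs.choose⟩)
            (fun i => L (x i) * h (x i)) := by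
  intro m x s hxC hs0 hs
  have hi₀ : s hs.choose ≠ 0 := hs.choose_spec
  set i₀ := hs.choose
  have hnem : (Finset.univ : Finset (Fin m)).Nonempty := ⟨i₀, Finset.mem_univ _⟩
  -- normalized points
  set y : Fin m → (Fin n → ℝ) := fun i => (L (x i))⁻¹ • x i with hy
  have hLxi : ∀ i, 0 < L (x i) := fun i => hLpos _ (hxC i)
  have hyC : ∀ i, y i ∈ C := fun i =>
    hcone _ (inv_pos.mpr (hLxi i)) _ (hxC i)
  -- weights
  set c : Fin m → ℝ := fun i => s i * L (x i) with hc
  have hc0 : ∀ i, 0 ≤ c i := fun i => mul_nonneg (hs0 i) (hLxi i).le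
  set T : ℝ := ∑ i, c i with hT
  have hTpos : 0 < T := by
    apply Finset.sum_pos' (fun i _ => hc0 i)
    exact ⟨i₀, Finset.mem_univ _, mul_pos ((hs0 i₀).lt_of_ne (Ne.symm hi₀)) (hLxi i₀)⟩
  set z : Fin n → ℝ := ∑ i, s i • x i with hz
  -- z as T • (convex combination of y)
  have hcy : ∀ i, (c i / T) • y i = (s i / T) • x i := by
    intro i
    rw [hy, smul_smul, hc]
    congr 1
    field_simp [hTpos.ne', (hLxi i).ne']
  have hwsum : ∑ i, (c i / T) = 1 := by
    rw [← Finset.sum_div, ← hT, div_self hTpos.ne']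
  set w : Fin n → ℝ := ∑ i, (c i / T) • y i with hw
  have hwz : z = T • w := by
    rw [hw, Finset.smul_sum]
    apply Finset.sum_congr rfl
    intro i _
    rw [hcy i, smul_smul, mul_div_cancel₀ _ hTpos.ne']
  have hwC : w ∈ C := hconv.sum_mem (fun i _ => div_nonneg (hc0 i) hTpos.le)
    hwsum (fun i _ => hyC i)
  have hzC : z ∈ C := by rw [hwz]; exact hcone _ hTpos _ hwC
  refine ⟨hzC, ?_⟩
  -- L z = T
  have hLz : L z = T := by
    rw [hz, map_sum, hT]
    apply Finset.sum_congr rfl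
    intro i _
    rw [map_smul, smul_eq_mul, hc]
  -- h y i = L (x i) * h (x i)
  have hhy : ∀ i, h (y i) = L (x i) * h (x i) := by
    intro i
    rw [hy, hhom _ (inv_pos.mpr (hLxi i)) _ (hxC i), div_eq_mul_inv, inv_inv, mul_comm]
  have hhyM : ∀ i, h (y i) ≤ Finset.univ.sup' hnem (fun j => L (x j) * h (x j)) := by
    intro i
    rw [hhy i]
    exact Finset.le_sup' (fun j => L (x j) * h (x j)) (Finset.mem_univ i)
  have hhw : h w ≤ Finset.univ.sup' hnem (fun j => L (x j) * h (x j)) := by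
    calc h w ≤ ∑ i, (c i / T) * h (y i) :=
          hcvx.map_sum_le (fun i _ => div_nonneg (hc0 i) hTpos.le) hwsum (fun i _ => hyC i)
      _ ≤ Finset.univ.sup' hnem (fun j => L (x j) * h (x j)) := by
        rw [← one_mul (Finset.univ.sup' hnem (fun j => L (x j) * h (x j))), ← hwsum,
          Finset.sum_mul]
        exact Finset.sum_le_sum fun i _ =>
          mul_le_mul_of_nonneg_left (hhyM i) (div_nonneg (hc0 i) hTpos.le)
  have hhz : h z = h w / T := by rw [hwz, hhom _ hTpos _ hwC]
  rw [hLz, hhz, mul_div_cancel₀ _ hTpos.ne']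
  exact hhw
end

section
/- Let h₁ : ℝ → ℝ be a function that is convex on the interval (−1, 1), attains its minimum over (−1, 1) at 0, and satisfies h₁(0) = 4·log φ, where φ = (1+√5)/2 is the golden ratio, together with the estimate h₁(1/2) − h₁(3/7) ≤ 1.06/14. Then for every t with 0 < t ≤ 3/7 one has (1 − (2/3)t)·h₁(t) < 4·log φ. -/
open Real

/-- If `h₁` is convex on `(-1, 1)`, minimized over `(-1,1)` at `0` with
`h₁ 0 = 4 log φ` (`φ` the golden ratio), and `h₁ (1/2) - h₁ (3/7) ≤ 1.06/14`, then
`(1 - (2/3) t) * h₁ t < 4 log φ` for all `0 < t ≤ 3/7`. -/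
theorem stmt2 (h₁ : ℝ → ℝ)
    (hcvx : ConvexOn ℝ (Set.Ioo (-1 : ℝ) 1) h₁)
    (hmin : ∀ t ∈ Set.Ioo (-1 : ℝ) 1, h₁ 0 ≤ h₁ t)
    (hval : h₁ 0 = 4 * Real.log ((1 + Real.sqrt 5) / 2))
    (hdiff : h₁ (1/2) - h₁ (3/7) ≤ 1.06 / 14) :
    ∀ t : ℝ, 0 < t → t ≤ 3/7 →
      (1 - (2/3) * t) * h₁ t < 4 * Real.log ((1 + Real.sqrt 5) / 2) := by
  intro t ht ht'
  set φ : ℝ := (1 + Real.sqrt 5) / 2 with hφdef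
  -- φ > 1.618
  have hs5 : Real.sqrt 5 > 2.236 := by
    nlinarith [Real.sq_sqrt (by norm_num : (5:ℝ) ≥ 0), Real.sqrt_nonneg 5]
  have hφ : φ > 1.618 := by rw [hφdef]; linarith
  have hφpos : (0:ℝ) < φ := by linarith
  -- log φ > 2/5
  have hlog : Real.log φ > 2/5 := by
    rw [gt_iff_lt, Real.lt_log_iff_exp_lt hφpos]
    have h5 : Real.exp (2/5) ^ 5 = Real.exp 2 := by
      rw [← Real.exp_nat_mul]; norm_num
    have he2 : Real.exp 2 < 7.39 := by
      have h1 := Real.exp_one_lt_d9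
      have : Real.exp 2 = Real.exp 1 ^ 2 := by
        rw [← Real.exp_nat_mul]; norm_num
      rw [this]; nlinarith [Real.exp_pos 1]
    have hφ5 : (1.618:ℝ)^5 < φ^5 :=
      pow_lt_pow_left₀ hφ (by norm_num) (by norm_num)
    have hlt : Real.exp (2/5) ^ 5 < φ ^ 5 := by
      rw [h5]; nlinarith
    exact lt_of_pow_lt_pow_left₀ 5 (le_of_lt hφpos) hlt
  set L : ℝ := 4 * Real.log φ with hLdef
  have hL : L > 1.6 := by rw [hLdef]; linarith
  -- memberships
  have mem0 : (0:ℝ) ∈ Set.Ioo (-1:ℝ) 1 := by constructor <;> norm_num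
  have memh : (1/2:ℝ) ∈ Set.Ioo (-1:ℝ) 1 := by constructor <;> norm_num
  have mem37 : (3/7:ℝ) ∈ Set.Ioo (-1:ℝ) 1 := by constructor <;> norm_num
  have memt : t ∈ Set.Ioo (-1:ℝ) 1 := by constructor <;> nlinarith
  -- h₁(3/7) ≥ L
  have h37ge : L ≤ h₁ (3/7) := by rw [← hval]; exact hmin _ mem37
  -- convexity at 3/7: h₁(3/7) ≤ (1/7)h₁(0) + (6/7)h₁(1/2)
  have hc1 := hcvx.2 mem0 memh (by norm_num : (0:ℝ) ≤ 1/7)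
    (by norm_num : (0:ℝ) ≤ 6/7) (by norm_num)
  have hc1' : h₁ (3/7) ≤ (1/7) * h₁ 0 + (6/7) * h₁ (1/2) := by
    have : (1/7:ℝ) • (0:ℝ) + (6/7:ℝ) • (1/2:ℝ) = 3/7 := by norm_num
    rw [this] at hc1; simpa using hc1
  have hc37 : h₁ (3/7) ≤ L + 6 * 1.06 / 14 := by linarith
  -- convexity at t: coefficients (1 - 7t/3, 7t/3) on points 0, 3/7
  have ha : (0:ℝ) ≤ 1 - 7*t/3 := by linarith
  have hb : (0:ℝ) ≤ 7*t/3 := by linarith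
  have hc2 := hcvx.2 mem0 mem37 ha hb (by ring)
  have hc2' : h₁ t ≤ (1 - 7*t/3) * h₁ 0 + (7*t/3) * h₁ (3/7) := by
    have : (1 - 7*t/3) • (0:ℝ) + (7*t/3) • (3/7:ℝ) = t := by
      simp [smul_eq_mul]; ring
    rw [this] at hc2; simpa using hc2
  rw [hval] at hc2'
  -- final estimate
  have hpos : (0:ℝ) < 1 - (2/3) * t := by linarith
  have hbound : h₁ t ≤ L + (7*t/3) * (h₁ (3/7) - L) := by nlinarith
  nlinarith [mul_nonneg hb (by linarith : (0:ℝ) ≤ h₁ (3/7) - L),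
    mul_pos ht (by linarith : (0:ℝ) < 2/3 * L - 1.06),
    mul_le_mul_of_nonneg_left hbound (le_of_lt hpos),
    mul_nonneg (mul_nonneg hb (by linarith : (0:ℝ) ≤ h₁ (3/7) - L)) (le_of_lt ht)]
end

section
/- Every real root of the polynomial x⁴ − x³ − x² − x + 1 is strictly less than φ², where φ = (1+√5)/2 is the golden ratio. -/
/-- Every real root of `x⁴ − x³ − x² − x + 1` is strictly less than `φ²`,
where `φ = (1+√5)/2` is the golden ratio. -/
theorem stmt6 :
    ∀ x : ℝ, x^4 - x^3 - x^2 - x + 1 = 0 → x < ((1 + Real.sqrt 5) / 2)^2 := by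
  intro x hx
  have h2 : x < 2 := by
    by_contra h
    push_neg at h
    nlinarith [sq_nonneg x, sq_nonneg (x - 1)]
  have h5 : Real.sqrt 5 ^ 2 = 5 := Real.sq_sqrt (by norm_num)
  have h5' : Real.sqrt 5 ≥ 2 := by nlinarith [Real.sqrt_nonneg 5]
  nlinarith
end

section
/- Let λ be the largest real root of the polynomial x⁴ − x³ − x² − x + 1 and let μ be the largest real root of the polynomial x¹⁴ − x¹⁰ − x⁷ − x⁴ + 1 (both polynomials have real roots greater than 1, since both take the value −1 at x = 1 and tend to +∞). Then 14·(4·log λ − 14·log μ) ≤ 1.06. -/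
open Real Finset in
private lemma exp_lb : (1:ℝ) + 1.06/14 + (1.06/14)^2/2 + (1.06/14)^3/6 + (1.06/14)^4/24
    ≤ Real.exp (1.06/14) := by
  have h := Real.sum_le_exp_of_nonneg (x := 1.06/14) (by norm_num) 5
  simp [Finset.sum_range_succ] at h
  norm_num [Nat.factorial] at h ⊢
  linarith

/-- If `l` is the largest real root of `x⁴ − x³ − x² − x + 1` and `m` is the
largest real root of `x¹⁴ − x¹⁰ − x⁷ − x⁴ + 1`, then `14 (4 log l − 14 log m) ≤ 1.06`. -/
theorem stmt7 (l m : ℝ)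
    (hl : l^4 - l^3 - l^2 - l + 1 = 0)
    (hlmax : ∀ x : ℝ, x^4 - x^3 - x^2 - x + 1 = 0 → x ≤ l)
    (hm : m^14 - m^10 - m^7 - m^4 + 1 = 0)
    (hmmax : ∀ x : ℝ, x^14 - x^10 - x^7 - x^4 + 1 = 0 → x ≤ m) :
    14 * (4 * Real.log l - 14 * Real.log m) ≤ 1.06 := by
  -- lower bound on m via IVT
  have hcont : ContinuousOn (fun x : ℝ => x^14 - x^10 - x^7 - x^4 + 1)
      (Set.Icc 1.16170443 1.16170444) := by fun_prop
  have hiv := intermediate_value_Icc (by norm_num : (1.16170443:ℝ) ≤ 1.16170444) hcont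
  have h0 : (0:ℝ) ∈ Set.Icc ((1.16170443:ℝ)^14 - 1.16170443^10 - 1.16170443^7
      - 1.16170443^4 + 1) ((1.16170444:ℝ)^14 - 1.16170444^10 - 1.16170444^7
      - 1.16170444^4 + 1) := by constructor <;> norm_num
  obtain ⟨x₀, hx₀, hfx₀⟩ := hiv h0
  have hmge : (1.16170443:ℝ) ≤ m := le_trans hx₀.1 (hmmax x₀ hfx₀)
  -- lower bound on l via IVT
  have hcont2 : ContinuousOn (fun x : ℝ => x^4 - x^3 - x^2 - x + 1)
      (Set.Icc (1.7:ℝ) 2) := by fun_prop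
  have hiv2 := intermediate_value_Icc (by norm_num : (1.7:ℝ) ≤ 2) hcont2
  have h02 : (0:ℝ) ∈ Set.Icc ((1.7:ℝ)^4 - 1.7^3 - 1.7^2 - 1.7 + 1)
      ((2:ℝ)^4 - 2^3 - 2^2 - 2 + 1) := by constructor <;> norm_num
  obtain ⟨x₁, hx₁, hfx₁⟩ := hiv2 h02
  have hlge : (1.7:ℝ) ≤ l := le_trans hx₁.1 (hlmax x₁ hfx₁)
  -- upper bound on l
  have hlub : l ≤ 1.72208381 := by
    by_contra h
    push_neg at h
    nlinarith [mul_pos (show (0:ℝ) < l - 1.72208381 by linarith)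
        (show (0:ℝ) < l^3 by positivity), sq_nonneg (l - 1.72208381),
        mul_pos (show (0:ℝ) < l - 1.72208381 by linarith)
        (show (0:ℝ) < l^2 by positivity),
      mul_pos (show (0:ℝ) < l - 1.72208381 by linarith) (show (0:ℝ) < l by linarith)]
  have hlpos : (0:ℝ) < l := by linarith
  have hmpos : (0:ℝ) < m := by linarith
  -- the key numeric estimate
  have hl4 : l^4 ≤ (1.72208381:ℝ)^4 := by
    apply pow_le_pow_left₀ (le_of_lt hlpos) hlub
  have hm14 : (1.16170443:ℝ)^14 ≤ m^14 := by
    apply pow_le_pow_left₀ (by norm_num) hmge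
  have key : l^4 / m^14 ≤ Real.exp (1.06/14) := by
    have h1 : l^4 / m^14 ≤ (1.72208381:ℝ)^4 / (1.16170443:ℝ)^14 := by
      apply div_le_div₀ (by positivity) hl4 (by positivity) hm14
    have h2 : (1.72208381:ℝ)^4 / (1.16170443:ℝ)^14
        ≤ (1:ℝ) + 1.06/14 + (1.06/14)^2/2 + (1.06/14)^3/6 + (1.06/14)^4/24 := by
      rw [div_le_iff₀ (by positivity)]
      norm_num
    linarith [exp_lb]
  have hlog : 4 * Real.log l - 14 * Real.log m ≤ 1.06/14 := by
    have e1 : Real.log (l^4 / m^14) = 4 * Real.log l - 14 * Real.log m := by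
      rw [Real.log_div (by positivity) (by positivity), Real.log_pow, Real.log_pow]
      push_cast
      ring
    rw [← e1]
    have := Real.log_le_log (by positivity) key
    rwa [Real.log_exp] at this
  linarith
end
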